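/- Let X and Y be real Banach spaces and f : X → Y a locally Lipschitz map with a pseudo-Jacobian mapping Jf satisfying the chain rule condition on X. If Jf is regular at x₀ ∈ X, then sur(f, x₀) ≥ cov f(x₀) ≥ reg Jf(x₀), where sur(f,x₀) is the Ioffe constant of surjection of f at x₀ and cov f(x₀) is the exact covering bound of f around x₀. -/

import Mathlib

open Filter Topology Metric Set MeasureTheory

noncomputable section

variable {X Y : Type*} [NormedAddCommGroup X] [NormedSpace ℝ X]
  [NormedAddCommGroup Y] [NormedSpace ℝ Y]

/-- The upper right-hand Dini derivative of `φ` at `x` in the direction `v`. -/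
def diniPlus (φ : X → ℝ) (x v : X) : ℝ :=
  Filter.limsup (fun t : ℝ => (φ (x + t • v) - φ x) / t) (𝓝[>] (0 : ℝ))

/-- `J` is a pseudo-Jacobian of `f` at `x`. -/
def IsPseudoJacobianAt (f : X → Y) (x : X) (J : Set (X →L[ℝ] Y)) : Prop :=
  J.Nonempty ∧ ∀ (y' : StrongDual ℝ Y) (v : X),
    diniPlus (fun z => y' (f z)) x v ≤ sSup ((fun T : X →L[ℝ] Y => y' (T v)) '' J)

/-- The Clarke generalized directional derivative of `φ` at `x` in the direction `v`. -/
def clarkeDeriv (φ : X → ℝ) (x v : X) : ℝ :=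
  Filter.limsup (fun p : X × ℝ => (φ (p.1 + p.2 • v) - φ p.1) / p.2)
    ((𝓝 x) ×ˢ (𝓝[>] (0 : ℝ)))

/-- The Clarke subdifferential of `φ` at `x`. -/
def clarkeSubdiff (φ : X → ℝ) (x : X) : Set (StrongDual ℝ X) :=
  {x' | ∀ v : X, x' v ≤ clarkeDeriv φ x v}

/-- `λ_F(x)`, the minimal norm of elements of the Clarke subdifferential of `F` at `x`. -/
def lambdaF (F : X → ℝ) (x : X) : ℝ :=
  sInf ((fun w : StrongDual ℝ X => ‖w‖) '' clarkeSubdiff F x)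

/-- The Banach constant `C(T) = inf {‖T* y*‖ : ‖y*‖ = 1}`. -/
def banachC (T : X →L[ℝ] Y) : ℝ :=
  sInf ((fun y' : StrongDual ℝ Y => ‖y'.comp T‖) '' {y' | ‖y'‖ = 1})

/-- The dual Banach constant `C*(T) = inf {‖T u‖ : ‖u‖ = 1}`. -/
def banachCStar (T : X →L[ℝ] Y) : ℝ :=
  sInf ((fun u : X => ‖T u‖) '' {u : X | ‖u‖ = 1})

/-- `sur Jf(x) = sup_{r>0} inf {C(T) : T ∈ co Jf(B(x;r))}`. -/
def surJ (Jf : X → Set (X →L[ℝ] Y)) (x : X) : ℝ :=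
  sSup {c : ℝ | ∃ r > (0 : ℝ),
    c = sInf (banachC '' convexHull ℝ (⋃ z ∈ ball x r, Jf z))}

/-- `inj Jf(x) = sup_{r>0} inf {C*(T) : T ∈ co Jf(B(x;r))}`. -/
def injJ (Jf : X → Set (X →L[ℝ] Y)) (x : X) : ℝ :=
  sSup {c : ℝ | ∃ r > (0 : ℝ),
    c = sInf (banachCStar '' convexHull ℝ (⋃ z ∈ ball x r, Jf z))}

/-- `Δ F_y(x) = ∂‖·‖(f(x)-y) ∘ co̅(Jf(x))`. -/
def DeltaF (f : X → Y) (Jf : X → Set (X →L[ℝ] Y)) (y : Y) (x : X) :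
    Set (StrongDual ℝ X) :=
  {w | ∃ y' ∈ clarkeSubdiff (fun z : Y => ‖z‖) (f x - y),
      ∃ T ∈ closure (convexHull ℝ (Jf x)), w = ContinuousLinearMap.comp y' T}

/-- The chain rule condition for the pseudo-Jacobian mapping `Jf` of `f` on `U`. -/
def ChainRuleCond (f : X → Y) (Jf : X → Set (X →L[ℝ] Y)) (U : Set X) : Prop :=
  ∀ x ∈ U, ∀ y : Y, y ≠ f x →
    IsClosed (StrongDual.toWeakDual '' DeltaF f Jf y x) ∧
    Convex ℝ (DeltaF f Jf y x) ∧
    IsPseudoJacobianAt (fun z : X => ‖f z - y‖) x (DeltaF f Jf y x)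

/-- The strong chain rule condition: the chain rule condition, `f` locally Lipschitz,
and `Δ F_y(x)` contains the Clarke subdifferential of `F_y` at `x`. -/
def StrongChainRuleCond (f : X → Y) (Jf : X → Set (X →L[ℝ] Y)) (U : Set X) : Prop :=
  ChainRuleCond f Jf U ∧
  (∀ x ∈ U, ∃ K : NNReal, ∃ t ∈ 𝓝 x, LipschitzOnWith K f t) ∧
  ∀ x ∈ U, ∀ y : Y, y ≠ f x →
    clarkeSubdiff (fun z : X => ‖f z - y‖) x ⊆ DeltaF f Jf y x

/-- `Jf` is regular at `x₀`. -/
def RegularAt (Jf : X → Set (X →L[ℝ] Y)) (x₀ : X) : Prop :=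
  (∃ r > (0 : ℝ), ∀ T ∈ convexHull ℝ (⋃ z ∈ ball x₀ r, Jf z),
      ∃ e : X ≃L[ℝ] Y, (e : X →L[ℝ] Y) = T) ∧
  surJ Jf x₀ = injJ Jf x₀ ∧ 0 < surJ Jf x₀

/-- The regularity index `reg Jf(x₀)`. -/
def regJ (Jf : X → Set (X →L[ℝ] Y)) (x₀ : X) : ℝ := surJ Jf x₀

/-- `f` is open with linear rate around `x₀`. -/
def OpenWithLinearRateAt (f : X → Y) (x₀ : X) : Prop :=
  ∃ V ∈ 𝓝 x₀, ∃ α > (0 : ℝ), ∀ x ∈ V, ∀ r > (0 : ℝ), ball x r ⊆ V →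
    ball (f x) (α * r) ⊆ f '' ball x r

/-- `h` is a weight: continuous, nondecreasing, nonnegative on `[0,∞)`,
with `∫₀^∞ dρ/(1+h(ρ)) = ∞`. -/
def IsWeight (h : ℝ → ℝ) : Prop :=
  ContinuousOn h (Ici 0) ∧ MonotoneOn h (Ici 0) ∧ (∀ ρ ∈ Ici (0 : ℝ), 0 ≤ h ρ) ∧
  ∫⁻ ρ in Ioi (0 : ℝ), ENNReal.ofReal (1 / (1 + h ρ)) = ⊤

/-- The weighted Chang–Palais–Smale condition for `F` with respect to the weight `h`. -/
def ChangPS (F : X → ℝ) (h : ℝ → ℝ) : Prop :=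
  ∀ u : ℕ → X, (∃ M : ℝ, ∀ n, |F (u n)| ≤ M) →
    Tendsto (fun n => lambdaF F (u n) * (1 + h ‖u n‖)) atTop (𝓝 0) →
    ∃ φ : ℕ → ℕ, StrictMono φ ∧ ∃ z : X, Tendsto ((fun n => u n) ∘ φ) atTop (𝓝 z)

/-- The local Lipschitz constant of `g` at `y`. -/
def lipConstAt (g : Y → X) (y : Y) : ℝ :=
  sInf {c : ℝ | ∃ r > (0 : ℝ), c = sSup {q : ℝ | ∃ u ∈ ball y r, ∃ w ∈ ball y r,
    u ≠ w ∧ q = ‖g u - g w‖ / ‖u - w‖}}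

/-- The exact covering bound `cov f(x₀)` of `f` around `x₀`. -/
def covBound (f : X → Y) (x₀ : X) : ℝ :=
  sSup {α : ℝ | 0 ≤ α ∧ ∃ V ∈ 𝓝 x₀, ∀ x ∈ V, ∀ r > (0 : ℝ), ball x r ⊆ V →
    ball (f x) (α * r) ⊆ f '' ball x r}

/-- The Ioffe modulus of surjection `S(f,x₀)(r)`. -/
def ioffeS (f : X → Y) (x₀ : X) (r : ℝ) : ℝ :=
  sSup {ρ : ℝ | 0 ≤ ρ ∧ ball (f x₀) ρ ⊆ f '' ball x₀ r}

/-- The Ioffe constant of surjection `sur(f,x₀)`. -/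
def ioffeSur (f : X → Y) (x₀ : X) : ℝ :=
  sSup {c : ℝ | ∃ ε > (0 : ℝ),
    c = sInf {q : ℝ | ∃ r : ℝ, 0 < r ∧ r < ε ∧ q = ioffeS f x₀ r / r}}


section AuxLemmas

variable {X Y : Type*} [NormedAddCommGroup X] [NormedSpace ℝ X]
  [NormedAddCommGroup Y] [NormedSpace ℝ Y]

lemma real_exists_gt {S : Set ℝ} (hne : S.Nonempty) {c : ℝ} (h : c < sSup S) :
    ∃ s ∈ S, c < s := by
  by_cases hb : BddAbove S
  · exact exists_lt_of_lt_csSup hne h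
  · obtain ⟨s, hs, hcs⟩ := not_bddAbove_iff.1 hb c
    exact ⟨s, hs, hcs⟩

lemma real_limsup_le {ι : Type*} {l : Filter ι} [l.NeBot] {g : ι → ℝ} {a b : ℝ}
    (hub : ∀ᶠ i in l, g i ≤ a) (hlb : ∀ᶠ i in l, b ≤ g i) : Filter.limsup g l ≤ a := by
  rw [limsup_eq]
  have hbdd : BddBelow {a | ∀ᶠ i in l, g i ≤ a} := by
    refine ⟨b, fun c hc => ?_⟩
    obtain ⟨i, hbi, hic⟩ := (hlb.and hc).exists
    linarith
  exact csInf_le hbdd hub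

lemma real_le_limsup {ι : Type*} {l : Filter ι} [l.NeBot] {g : ι → ℝ} {b : ℝ}
    (hlb : ∀ᶠ i in l, b ≤ g i) (hb : b ≤ 0) : b ≤ Filter.limsup g l := by
  rw [limsup_eq]
  rcases Set.eq_empty_or_nonempty {a | ∀ᶠ i in l, g i ≤ a} with h | h
  · rw [h, Real.sInf_empty]; exact hb
  · apply le_csInf h
    intro c hc
    obtain ⟨i, hbi, hic⟩ := (hlb.and hc).exists
    linarith

theorem ekeland_cont {Z : Type*} [MetricSpace Z] [CompleteSpace Z] {F : Z → ℝ}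
    (hF : Continuous F) (hF0 : ∀ x, 0 ≤ F x) {x : Z} {α : ℝ} (hα : 0 < α) :
    ∃ z : Z, F z + α * dist z x ≤ F x ∧ ∀ u : Z, F z ≤ F u + α * dist u z := by
  classical
  set S : Z → Set Z := fun y => {u | F u + α * dist u y ≤ F y} with hS
  have hself : ∀ y, y ∈ S y := by intro y; simp [hS]
  have hne : ∀ y, (S y).Nonempty := fun y => ⟨y, hself y⟩
  have hbdd : ∀ y, BddBelow (F '' S y) := by
    intro y; exact ⟨0, by rintro a ⟨u, _, rfl⟩; exact hF0 u⟩
  have htrans : ∀ y u v, u ∈ S y → v ∈ S u → v ∈ S y := by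
    intro y u v hu hv
    have h1 : F v + α * dist v u ≤ F u := hv
    have h2 : F u + α * dist u y ≤ F y := hu
    have h3 : dist v y ≤ dist v u + dist u y := dist_triangle v u y
    have := mul_le_mul_of_nonneg_left h3 hα.le
    simp only [hS, Set.mem_setOf_eq]
    nlinarith
  have hex : ∀ (y : Z) (n : ℕ), ∃ u, u ∈ S y ∧ F u ≤ sInf (F '' S y) + (1/2)^n := by
    intro y n
    have hpos : (0:ℝ) < (1/2)^n := by positivity
    have : sInf (F '' S y) < sInf (F '' S y) + (1/2)^n := by linarith
    obtain ⟨a, ⟨u, hu, rfl⟩, ha⟩ := exists_lt_of_csInf_lt ((hne y).image F) this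
    exact ⟨u, hu, ha.le⟩
  let z : ℕ → Z := fun n => Nat.rec x (fun n zn => Classical.choose (hex zn n)) n
  have hz0 : z 0 = x := rfl
  have hzs : ∀ n, z (n+1) = Classical.choose (hex (z n) n) := fun n => rfl
  have hstep : ∀ n, z (n+1) ∈ S (z n) ∧ F (z (n+1)) ≤ sInf (F '' S (z n)) + (1/2)^n := by
    intro n; rw [hzs n]; exact Classical.choose_spec (hex (z n) n)
  have hchain : ∀ n m, n ≤ m → z m ∈ S (z n) := by
    intro n m hnm
    induction m with
    | zero => simp_all [Nat.le_zero.mp hnm, hself]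
    | succ k ih =>
      rcases Nat.lt_or_ge n (k+1) with h | h
      · exact htrans _ _ _ (ih (Nat.lt_succ_iff.mp h)) (hstep k).1
      · have : n = k + 1 := le_antisymm hnm h
        subst this; exact hself _
  have hanti : Antitone fun n => F (z n) := by
    apply antitone_nat_of_succ_le
    intro n
    have h : F (z (n+1)) + α * dist (z (n+1)) (z n) ≤ F (z n) := (hstep n).1
    nlinarith [dist_nonneg (x := z (n+1)) (y := z n)]
  have hblw : BddBelow (Set.range fun n => F (z n)) :=
    ⟨0, by rintro a ⟨n, rfl⟩; exact hF0 _⟩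
  set l : ℝ := ⨅ n, F (z n) with hl
  have htendF : Tendsto (fun n => F (z n)) atTop (𝓝 l) :=
    tendsto_atTop_ciInf hanti hblw
  have hdistm : ∀ n m, n ≤ m → α * dist (z m) (z n) ≤ F (z n) - F (z m) := by
    intro n m hnm
    have h : F (z m) + α * dist (z m) (z n) ≤ F (z n) := hchain n m hnm
    linarith
  have hlle : ∀ n, l ≤ F (z n) := fun n => ciInf_le hblw n
  have hcauchy : CauchySeq z := by
    apply cauchySeq_of_le_tendsto_0 (fun n => (F (z n) - l) / α)
    · intro n m N hn hm
      rcases le_total n m with h | h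
      · have h1 := hdistm n m h
        have h2 : F (z n) ≤ F (z N) := hanti hn
        have h3 := hlle m
        rw [dist_comm]
        rw [le_div_iff₀ hα]
        nlinarith
      · have h1 := hdistm m n h
        have h2 : F (z m) ≤ F (z N) := hanti hm
        have h3 := hlle n
        rw [le_div_iff₀ hα]
        nlinarith
    · have h1 : Tendsto (fun n => F (z n) - l) atTop (𝓝 (l - l)) :=
        htendF.sub tendsto_const_nhds
      rw [sub_self] at h1
      simpa using h1.div_const α
  obtain ⟨zz, hzz⟩ := cauchySeq_tendsto_of_complete hcauchy
  have hFzz : F zz = l := by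
    have h1 : Tendsto (fun n => F (z n)) atTop (𝓝 (F zz)) := (hF.tendsto zz).comp hzz
    exact tendsto_nhds_unique h1 htendF
  have hzzS : ∀ n, zz ∈ S (z n) := by
    intro n
    have hev : ∀ᶠ m in atTop, F (z m) + α * dist (z m) (z n) ≤ F (z n) := by
      filter_upwards [eventually_ge_atTop n] with m hm using hchain n m hm
    have hlim : Tendsto (fun m => F (z m) + α * dist (z m) (z n)) atTop
        (𝓝 (l + α * dist zz (z n))) :=
      htendF.add (tendsto_const_nhds.mul (hzz.dist tendsto_const_nhds))
    have := le_of_tendsto hlim hev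
    show F zz + α * dist zz (z n) ≤ F (z n)
    rw [hFzz]
    exact this
  refine ⟨zz, ?_, ?_⟩
  · have h := hzzS 0
    rw [hz0] at h
    exact h
  · intro u
    by_contra hu
    push_neg at hu
    have huS : ∀ n, u ∈ S (z n) := by
      intro n
      have h1 : F zz + α * dist zz (z n) ≤ F (z n) := hzzS n
      have h2 : dist u (z n) ≤ dist u zz + dist zz (z n) := dist_triangle _ _ _
      show F u + α * dist u (z n) ≤ F (z n)
      nlinarith
    have hFu : ∀ n, F (z (n+1)) ≤ F u + (1/2:ℝ)^n := by
      intro n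
      have h := (hstep n).2
      have h2 : sInf (F '' S (z n)) ≤ F u := csInf_le (hbdd _) ⟨u, huS n, rfl⟩
      linarith
    have hlF : l ≤ F u := by
      have h1 : Tendsto (fun n : ℕ => F u + (1/2:ℝ)^n) atTop (𝓝 (F u + 0)) :=
        tendsto_const_nhds.add
          (tendsto_pow_atTop_nhds_zero_of_lt_one (by norm_num) (by norm_num))
      have h2 : Tendsto (fun n => F (z (n+1))) atTop (𝓝 l) :=
        htendF.comp (tendsto_add_atTop_nat 1)
      have := le_of_tendsto_of_tendsto' h2 h1 hFu
      linarith
    nlinarith [dist_nonneg (x := u) (y := zz)]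

theorem weakdual_functional_is_eval (g : WeakDual ℝ X →L[ℝ] ℝ) :
    ∃ v : X, ∀ w : WeakDual ℝ X, g w = w v := by
  have hU : g ⁻¹' (Metric.ball (0:ℝ) 1) ∈ 𝓝 (0 : WeakDual ℝ X) := by
    have := g.continuous.continuousAt (x := 0)
    apply this.preimage_mem_nhds
    simpa using Metric.ball_mem_nhds (0:ℝ) one_pos
  rw [show 𝓝 (0 : WeakDual ℝ X) = Filter.comap (fun (x : WeakDual ℝ X) (y : X) => x y)
    (𝓝 (fun y => (0 : WeakDual ℝ X) y)) from nhds_induced _ _, Filter.mem_comap] at hU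
  obtain ⟨s, hs, hsub⟩ := hU
  rw [nhds_pi, Filter.mem_pi] at hs
  obtain ⟨I, hIfin, t, ht, hts⟩ := hs
  have hker : ∀ w : WeakDual ℝ X, (∀ v ∈ I, w v = 0) → g w = 0 := by
    intro w hw
    by_contra h0
    have hc : ∀ c : ℝ, |g (c • w)| < 1 := by
      intro c
      have hmem : g (c • w) ∈ Metric.ball (0:ℝ) 1 := by
        apply hsub
        show (fun v : X => (c • w) v) ∈ s
        apply hts
        intro v hv
        show (c • w) v ∈ t v
        have hz : (c • w) v = 0 := by
          show c * w v = 0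
          rw [hw v hv, mul_zero]
        rw [hz]
        exact mem_of_mem_nhds (ht v)
      simpa [Real.dist_eq, abs_mul] using hmem
    have h2 := hc ((2 : ℝ) / g w)
    rw [_root_.map_smul] at h2
    simp only [smul_eq_mul, abs_mul, abs_div] at h2
    rw [div_mul_cancel₀ _ (abs_ne_zero.2 h0)] at h2
    norm_num at h2
  haveI := hIfin.fintype
  let L : I → (WeakDual ℝ X) →ₗ[ℝ] ℝ := fun i =>
    { toFun := fun w => w (i : X)
      map_add' := fun a b => rfl
      map_smul' := fun c a => rfl }
  have hspan : (g : (WeakDual ℝ X) →ₗ[ℝ] ℝ) ∈ Submodule.span ℝ (Set.range L) := by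
    apply mem_span_of_iInf_ker_le_ker
    intro w hw
    simp only [Submodule.mem_iInf, LinearMap.mem_ker] at hw ⊢
    exact hker w (fun v hv => hw ⟨v, hv⟩)
  rw [Submodule.mem_span_range_iff_exists_fun] at hspan
  obtain ⟨c, hc⟩ := hspan
  refine ⟨∑ i, c i • (i : X), fun w => ?_⟩
  have h5 := congrArg (fun (h : (WeakDual ℝ X) →ₗ[ℝ] ℝ) => h w) hc
  simp only [LinearMap.coe_sum, Finset.sum_apply, LinearMap.smul_apply] at h5
  simp only [L, LinearMap.coe_mk, AddHom.coe_mk] at h5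
  have h3 : w (∑ i : I, c i • (i : X)) = ∑ i : I, c i • w (i : X) := by
    rw [map_sum]
    simp [_root_.map_smul]
  rw [h3]
  exact h5.symm

theorem key_sep (Δ : Set (StrongDual ℝ X)) (hne : Δ.Nonempty)
    (hconv : Convex ℝ Δ) (hclosed : IsClosed (StrongDual.toWeakDual '' Δ))
    {m m'' : ℝ} (hm'' : 0 ≤ m'') (hmm : m'' < m)
    (hnorm : ∀ w ∈ Δ, m ≤ ‖w‖) :
    ∃ v : X, sSup ((fun w : StrongDual ℝ X => w v) '' Δ) < -(m'' * ‖v‖) := by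
  classical
  haveI : LocallyConvexSpace ℝ (WeakDual ℝ X) :=
    WeakBilin.locallyConvexSpace (B := topDualPairing ℝ X)
  set Δ' : Set (WeakDual ℝ X) := StrongDual.toWeakDual '' Δ with hΔ'
  set K : Set (WeakDual ℝ X) := (WeakDual.toStrongDual (𝕜 := ℝ) (E := X)) ⁻¹'
    Metric.closedBall (0 : StrongDual ℝ X) m'' with hK
  have hKcomp : IsCompact K := WeakDual.isCompact_closedBall (0 : StrongDual ℝ X) m''
  have hKconv : Convex ℝ K := by
    intro a ha b hb s t hs ht hst
    simp only [hK, Set.mem_preimage, Metric.mem_closedBall, dist_zero_right] at *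
    calc ‖WeakDual.toStrongDual (s • a + t • b)‖
        = ‖s • WeakDual.toStrongDual a + t • WeakDual.toStrongDual b‖ := by rfl
      _ ≤ s * ‖WeakDual.toStrongDual a‖ + t * ‖WeakDual.toStrongDual b‖ := by
          refine (norm_add_le _ _).trans ?_
          rw [norm_smul, norm_smul, Real.norm_eq_abs, Real.norm_eq_abs,
            abs_of_nonneg hs, abs_of_nonneg ht]
      _ ≤ s * m'' + t * m'' := by
          have := mul_le_mul_of_nonneg_left ha hs
          have := mul_le_mul_of_nonneg_left hb ht
          linarith
      _ = m'' := by rw [← add_mul, hst, one_mul]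
  have hΔ'conv : Convex ℝ Δ' := by
    intro a ha b hb s t hs ht hst
    obtain ⟨a0, ha0, rfl⟩ := ha
    obtain ⟨b0, hb0, rfl⟩ := hb
    exact ⟨s • a0 + t • b0, hconv ha0 hb0 hs ht hst, rfl⟩
  have hdisj : Disjoint K Δ' := by
    rw [Set.disjoint_left]
    rintro w hwK ⟨w0, hw0, rfl⟩
    have h1 : ‖w0‖ ≤ m'' := by
      simpa [hK] using hwK
    have h2 := hnorm w0 hw0
    linarith
  obtain ⟨g, s, t, hgK, hst, hgΔ⟩ :=
    geometric_hahn_banach_compact_closed hKconv hKcomp hΔ'conv hclosed hdisj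
  obtain ⟨v, hv⟩ := weakdual_functional_is_eval g
  have hm''v : m'' * ‖v‖ < s := by
    rcases eq_or_ne v 0 with rfl | hv0
    · have h0 : (0 : WeakDual ℝ X) ∈ K := by
        simp [hK, hm'']
      have h1 := hgK 0 h0
      rw [map_zero] at h1
      simpa using h1
    · obtain ⟨g₀, hg₀n, hg₀v⟩ := exists_dual_vector ℝ v (norm_ne_zero_iff.2 hv0)
      set u : StrongDual ℝ X := m'' • g₀ with hu
      have huK : StrongDual.toWeakDual u ∈ K := by
        simp only [hK, Set.mem_preimage, Metric.mem_closedBall, dist_zero_right]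
        have : ‖u‖ = m'' * ‖g₀‖ := by
          rw [hu, norm_smul, Real.norm_eq_abs, abs_of_nonneg hm'']
        show ‖u‖ ≤ m''
        rw [this, hg₀n, mul_one]
      have := hgK _ huK
      rw [hv] at this
      have heval : (StrongDual.toWeakDual u) v = m'' * ‖v‖ := by
        show u v = m'' * ‖v‖
        rw [hu]
        show m'' * g₀ v = m'' * ‖v‖
        rw [hg₀v]
        norm_cast
      rw [heval] at this
      exact this
  refine ⟨-v, ?_⟩
  have himg : ∀ w ∈ Δ, w (-v) ≤ -t := by
    intro w hw
    have := hgΔ (StrongDual.toWeakDual w) ⟨w, hw, rfl⟩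
    rw [hv] at this
    have heval : (StrongDual.toWeakDual w) v = w v := rfl
    rw [heval] at this
    rw [map_neg]
    linarith
  have hsup : sSup ((fun w : StrongDual ℝ X => w (-v)) '' Δ) ≤ -t := by
    apply csSup_le (hne.image _)
    rintro a ⟨w, hw, rfl⟩
    exact himg w hw
  have : -(m'' * ‖-v‖) > -t := by
    rw [norm_neg]
    linarith
  linarith

lemma clarkeDeriv_norm_le (u v : Y) : clarkeDeriv (fun z : Y => ‖z‖) u v ≤ ‖v‖ := by
  have hub : ∀ᶠ p : Y × ℝ in (𝓝 u) ×ˢ (𝓝[>] (0:ℝ)),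
      (‖p.1 + p.2 • v‖ - ‖p.1‖) / p.2 ≤ ‖v‖ := by
    filter_upwards [Filter.Eventually.prod_inr self_mem_nhdsWithin _] with p hp
    have hp2 : (0:ℝ) < p.2 := hp
    rw [div_le_iff₀ hp2]
    have := norm_add_le p.1 (p.2 • v)
    rw [norm_smul, Real.norm_eq_abs, abs_of_pos hp2] at this
    nlinarith
  have hlb : ∀ᶠ p : Y × ℝ in (𝓝 u) ×ˢ (𝓝[>] (0:ℝ)),
      -‖v‖ ≤ (‖p.1 + p.2 • v‖ - ‖p.1‖) / p.2 := by
    filter_upwards [Filter.Eventually.prod_inr self_mem_nhdsWithin _] with p hp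
    have hp2 : (0:ℝ) < p.2 := hp
    rw [le_div_iff₀ hp2]
    have := norm_sub_norm_le p.1 (p.1 + p.2 • v)
    rw [sub_add_cancel_left, norm_neg, norm_smul, Real.norm_eq_abs, abs_of_pos hp2] at this
    nlinarith
  exact real_limsup_le hub hlb

lemma clarkeDeriv_norm_neg_self (u : Y) :
    clarkeDeriv (fun z : Y => ‖z‖) u (-u) ≤ -‖u‖ := by
  apply le_of_forall_pos_le_add
  intro ε hε
  show Filter.limsup (fun p : Y × ℝ => (‖p.1 + p.2 • (-u)‖ - ‖p.1‖) / p.2)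
    ((𝓝 u) ×ˢ (𝓝[>] (0 : ℝ))) ≤ -‖u‖ + ε
  set δ := ε / 4 with hδ
  have hδpos : 0 < δ := by positivity
  have hub : ∀ᶠ p : Y × ℝ in (𝓝 u) ×ˢ (𝓝[>] (0:ℝ)),
      (‖p.1 + p.2 • (-u)‖ - ‖p.1‖) / p.2 ≤ -‖u‖ + 2 * δ := by
    have h1 : Metric.ball u δ ×ˢ (Set.Ioo (0:ℝ) 1) ∈ (𝓝 u) ×ˢ (𝓝[>] (0:ℝ)) := by
      apply Filter.prod_mem_prod (Metric.ball_mem_nhds u hδpos)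
      exact Filter.inter_mem self_mem_nhdsWithin
        (nhdsWithin_le_nhds (Iio_mem_nhds one_pos))
    filter_upwards [h1] with p hp
    have hz := hp.1
    have ht0 := hp.2.1
    have ht1 := hp.2.2
    set z := p.1
    set t := p.2
    have key : z + t • (-u) = (1 - t) • z + t • (z - u) := by
      module
    have hnorm : ‖z + t • (-u)‖ ≤ (1 - t) * ‖z‖ + t * ‖z - u‖ := by
      rw [key]
      refine (norm_add_le _ _).trans ?_
      rw [norm_smul, norm_smul, Real.norm_eq_abs, Real.norm_eq_abs,
        abs_of_pos (by linarith : (0:ℝ) < 1 - t), abs_of_pos ht0]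
    have hzu : ‖z - u‖ < δ := by
      rw [← dist_eq_norm]; exact hz
    have hzn : ‖u‖ - δ ≤ ‖z‖ := by
      have h2 := norm_sub_norm_le u z
      have h3 : ‖u - z‖ < δ := by
        rw [← dist_eq_norm, dist_comm]
        exact hz
      linarith
    rw [div_le_iff₀ ht0]
    nlinarith
  have hlb : ∀ᶠ p : Y × ℝ in (𝓝 u) ×ˢ (𝓝[>] (0:ℝ)),
      -‖u‖ ≤ (‖p.1 + p.2 • (-u)‖ - ‖p.1‖) / p.2 := by
    filter_upwards [Filter.Eventually.prod_inr self_mem_nhdsWithin _] with p hp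
    have hp2 : (0:ℝ) < p.2 := hp
    rw [le_div_iff₀ hp2]
    have := norm_sub_norm_le p.1 (p.1 + p.2 • (-u))
    rw [sub_add_cancel_left, norm_neg, norm_smul, Real.norm_eq_abs, abs_of_pos hp2,
      norm_neg] at this
    nlinarith
  have := real_limsup_le hub hlb
  have h2δ : 2 * δ ≤ ε := by rw [hδ]; linarith
  linarith

lemma norm_eq_one_of_clarkeSubdiff_norm {u : Y} (hu : u ≠ 0)
    {y' : StrongDual ℝ Y} (hy' : y' ∈ clarkeSubdiff (fun z : Y => ‖z‖) u) :
    ‖y'‖ = 1 := by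
  have h1 : ∀ v : Y, y' v ≤ ‖v‖ := fun v => (hy' v).trans (clarkeDeriv_norm_le u v)
  have hle : ‖y'‖ ≤ 1 := by
    apply ContinuousLinearMap.opNorm_le_bound _ zero_le_one
    intro v
    rw [one_mul]
    rw [Real.norm_eq_abs, abs_le]
    constructor
    · have := h1 (-v)
      rw [map_neg, norm_neg] at this
      linarith
    · exact h1 v
  have h2 : y' (-u) ≤ -‖u‖ := (hy' (-u)).trans (clarkeDeriv_norm_neg_self u)
  rw [map_neg] at h2
  have h3 : ‖u‖ ≤ y' u := by linarith
  have h4 : y' u ≤ ‖y'‖ * ‖u‖ := by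
    calc y' u ≤ |y' u| := le_abs_self _
      _ ≤ ‖y'‖ * ‖u‖ := y'.le_opNorm u
  have hu0 : 0 < ‖u‖ := norm_pos_iff.2 hu
  have hge : 1 ≤ ‖y'‖ := by
    nlinarith
  linarith

lemma neg_le_diniPlus {φ : X → ℝ} {z v : X} {c : ℝ} (hc : 0 ≤ c)
    (h : ∀ t : ℝ, 0 < t → φ z ≤ φ (z + t • v) + c * (t * ‖v‖)) :
    -(c * ‖v‖) ≤ diniPlus φ z v := by
  apply real_le_limsup
  · filter_upwards [self_mem_nhdsWithin] with t (ht : (0:ℝ) < t)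
    rw [le_div_iff₀ ht]
    have := h t ht
    nlinarith
  · have : 0 ≤ c * ‖v‖ := mul_nonneg hc (norm_nonneg _)
    linarith

lemma banachC_nonneg (T : X →L[ℝ] Y) : 0 ≤ banachC T := by
  apply Real.sInf_nonneg
  rintro a ⟨y', _, rfl⟩
  exact norm_nonneg _

lemma banachC_le_comp {y' : StrongDual ℝ Y} (hy' : ‖y'‖ = 1) (T : X →L[ℝ] Y) :
    banachC T ≤ ‖y'.comp T‖ := by
  apply csInf_le
  · exact ⟨0, by rintro a ⟨y'', _, rfl⟩; exact norm_nonneg _⟩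
  · exact ⟨y', hy', rfl⟩

lemma banachC_sub_le [Nontrivial Y] (T S : X →L[ℝ] Y) :
    banachC T ≤ banachC S + ‖T - S‖ := by
  obtain ⟨y₁, hy₁⟩ := exists_ne (0 : Y)
  obtain ⟨g₁, hg₁, -⟩ := exists_dual_vector ℝ y₁ (norm_ne_zero_iff.2 hy₁)
  have himne : ((fun y' : StrongDual ℝ Y => ‖y'.comp S‖) '' {y' | ‖y'‖ = 1}).Nonempty :=
    ⟨‖g₁.comp S‖, g₁, hg₁, rfl⟩
  have h : banachC T - ‖T - S‖ ≤ sInf ((fun y' : StrongDual ℝ Y => ‖y'.comp S‖) ''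
      {y' | ‖y'‖ = 1}) := by
    apply le_csInf himne
    rintro b ⟨y', hy', rfl⟩
    have h1 : banachC T ≤ ‖y'.comp T‖ := banachC_le_comp hy' T
    have h2 : ‖y'.comp T - y'.comp S‖ ≤ ‖T - S‖ := by
      have he : y'.comp T - y'.comp S = y'.comp (T - S) := by
        ext w
        simp
      rw [he]
      calc ‖y'.comp (T - S)‖ ≤ ‖y'‖ * ‖T - S‖ := ContinuousLinearMap.opNorm_comp_le _ _
        _ = ‖T - S‖ := by rw [hy', one_mul]
    have h3 : ‖y'.comp T‖ - ‖y'.comp S‖ ≤ ‖T - S‖ :=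
      (norm_sub_norm_le _ _).trans h2
    linarith
  have : banachC S = sInf ((fun y' : StrongDual ℝ Y => ‖y'.comp S‖) ''
      {y' | ‖y'‖ = 1}) := rfl
  linarith [h, this ▸ h]

lemma le_banachC_of_closure [Nontrivial Y] {s : Set (X →L[ℝ] Y)} {m : ℝ}
    (h : ∀ S ∈ s, m ≤ banachC S) {T : X →L[ℝ] Y} (hT : T ∈ closure s) :
    m ≤ banachC T := by
  by_contra hlt
  push_neg at hlt
  obtain ⟨S, hS, hd⟩ := Metric.mem_closure_iff.1 hT (m - banachC T) (by linarith)
  have h1 : banachC S ≤ banachC T + ‖S - T‖ := banachC_sub_le S T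
  have h2 : ‖S - T‖ = dist T S := by rw [dist_eq_norm, norm_sub_rev]
  have := h S hS
  rw [h2] at h1
  linarith

end AuxLemmas

/-- If `f : X → Y` is locally Lipschitz with a pseudo-Jacobian mapping `Jf` satisfying the
chain rule condition on `X`, and `Jf` is regular at `x₀`, then
`sur(f,x₀) ≥ cov f(x₀) ≥ reg Jf(x₀)`. -/
theorem sur_ge_cov_ge_reg {X Y : Type*}
    [NormedAddCommGroup X] [NormedSpace ℝ X] [CompleteSpace X]
    [NormedAddCommGroup Y] [NormedSpace ℝ Y] [CompleteSpace Y]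
    (f : X → Y) (hf : LocallyLipschitz f)
    (Jf : X → Set (X →L[ℝ] Y)) (hJf : ∀ x : X, IsPseudoJacobianAt f x (Jf x))
    (hcr : ChainRuleCond f Jf Set.univ) (x₀ : X) (hreg : RegularAt Jf x₀) :
    regJ Jf x₀ ≤ covBound f x₀ ∧ covBound f x₀ ≤ ioffeSur f x₀ := by
  classical
  obtain ⟨-, -, hsurpos⟩ := hreg
  have fcont : Continuous f := hf.continuous
  -- Y is nontrivial
  have hYnt : Nontrivial Y := by
    by_contra hY
    rw [not_nontrivial_iff_subsingleton] at hY
    have hbc : ∀ T : X →L[ℝ] Y, banachC T = 0 := by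
      intro T
      have hsphere : {y' : StrongDual ℝ Y | ‖y'‖ = 1} = ∅ := by
        ext y'
        simp only [Set.mem_setOf_eq, Set.mem_empty_iff_false, iff_false]
        intro h
        have hz : y' = 0 := Subsingleton.elim _ _
        rw [hz, norm_zero] at h
        norm_num at h
      show sInf ((fun y' : StrongDual ℝ Y => ‖y'.comp T‖) '' {y' | ‖y'‖ = 1}) = 0
      rw [hsphere, Set.image_empty, Real.sInf_empty]
    have hinf : ∀ r : ℝ, 0 < r →
        sInf (banachC '' convexHull ℝ (⋃ z ∈ ball x₀ r, Jf z)) = 0 := by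
      intro r hr
      obtain ⟨T₀, hT₀⟩ := (hJf x₀).1
      have hT₀' : T₀ ∈ convexHull ℝ (⋃ z ∈ ball x₀ r, Jf z) :=
        subset_convexHull ℝ _ (Set.mem_biUnion (mem_ball_self hr) hT₀)
      apply le_antisymm
      · have hmem : banachC T₀ ∈ banachC '' convexHull ℝ (⋃ z ∈ ball x₀ r, Jf z) :=
          Set.mem_image_of_mem _ hT₀'
        have h1 := csInf_le (⟨0, by rintro a ⟨T, -, rfl⟩; rw [hbc]⟩ :
          BddBelow (banachC '' convexHull ℝ (⋃ z ∈ ball x₀ r, Jf z))) hmem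
        rw [hbc] at h1
        exact h1
      · apply le_csInf ⟨_, Set.mem_image_of_mem _ hT₀'⟩
        rintro b ⟨T, -, rfl⟩
        rw [hbc]
    have hset : {c : ℝ | ∃ r > (0 : ℝ),
        c = sInf (banachC '' convexHull ℝ (⋃ z ∈ ball x₀ r, Jf z))} = {0} := by
      ext c
      simp only [Set.mem_setOf_eq, Set.mem_singleton_iff]
      constructor
      · rintro ⟨r, hr, rfl⟩
        exact hinf r hr
      · rintro rfl
        exact ⟨1, one_pos, (hinf 1 one_pos).symm⟩
    have hzero : surJ Jf x₀ = 0 := by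
      show sSup _ = 0
      rw [hset, csSup_singleton]
    rw [hzero] at hsurpos
    exact lt_irrefl 0 hsurpos
  obtain ⟨y0, hy0⟩ := exists_ne (0 : Y)
  have hy0n : 0 < ‖y0‖ := norm_pos_iff.2 hy0
  obtain ⟨KL, tset, htset, hlip⟩ := hf x₀
  obtain ⟨δL, hδL, hδLsub⟩ := Metric.mem_nhds_iff.1 htset
  -- a bound on covering radii coming from the Lipschitz property
  have hPbound : ∀ rr : ℝ, 0 < rr → rr ≤ δL → ∀ ρ : ℝ, 0 ≤ ρ →
      ball (f x₀) ρ ⊆ f '' ball x₀ rr → ρ ≤ (KL : ℝ) * rr := by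
    intro rr hrr hrrδ ρ hρ0 hρsub
    by_contra hgt
    push_neg at hgt
    set sθ := ((KL : ℝ) * rr + ρ)/2 with hsθ
    have hKpos : (0:ℝ) ≤ (KL:ℝ) * rr := mul_nonneg KL.coe_nonneg hrr.le
    have hs1 : (KL : ℝ) * rr < sθ := by rw [hsθ]; linarith
    have hs2 : sθ < ρ := by rw [hsθ]; linarith
    have hspos : 0 < sθ := lt_of_le_of_lt hKpos hs1
    set p := f x₀ + (sθ / ‖y0‖) • y0 with hp
    have hdist : dist p (f x₀) = sθ := by
      rw [hp, dist_eq_norm, add_sub_cancel_left, norm_smul, Real.norm_eq_abs,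
        abs_of_pos (by positivity), div_mul_cancel₀]
      exact ne_of_gt hy0n
    have hpball : p ∈ ball (f x₀) ρ := by
      rw [mem_ball, hdist]
      exact hs2
    obtain ⟨u, hu, hup⟩ := hρsub hpball
    have hu1 : u ∈ tset := hδLsub (mem_ball.2 (lt_of_lt_of_le (mem_ball.1 hu) hrrδ))
    have hx₀1 : x₀ ∈ tset := hδLsub (mem_ball_self hδL)
    have hld : dist (f u) (f x₀) ≤ (KL : ℝ) * dist u x₀ :=
      hlip.dist_le_mul u hu1 x₀ hx₀1
    have hld2 : dist (f u) (f x₀) ≤ (KL:ℝ) * rr := by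
      refine hld.trans ?_
      exact mul_le_mul_of_nonneg_left (mem_ball.1 hu).le KL.coe_nonneg
    rw [hup, hdist] at hld2
    linarith
  -- the set defining covBound
  set covSet := {α : ℝ | 0 ≤ α ∧ ∃ V ∈ 𝓝 x₀, ∀ x ∈ V, ∀ r > (0 : ℝ), ball x r ⊆ V →
    ball (f x) (α * r) ⊆ f '' ball x r} with hcovSet
  have hzeromem : (0:ℝ) ∈ covSet := by
    refine ⟨le_refl 0, Set.univ, Filter.univ_mem, ?_⟩
    intro x _ r hr _
    rw [zero_mul, Metric.ball_zero]
    exact Set.empty_subset _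
  have hcovBdd : BddAbove covSet := by
    refine ⟨(KL : ℝ), ?_⟩
    rintro α ⟨hα0, V, hV, hcov⟩
    by_contra hαK
    push_neg at hαK
    obtain ⟨η, hη, hηsub⟩ :=
      Metric.mem_nhds_iff.1 (Filter.inter_mem hV (Metric.ball_mem_nhds x₀ hδL))
    set rr := min (η/2) δL with hrr
    have hrr0 : 0 < rr := lt_min (by linarith) hδL
    have hrrδ : rr ≤ δL := min_le_right _ _
    have hrrη : rr < η := lt_of_le_of_lt (min_le_left _ _) (by linarith)
    have hx₀V : x₀ ∈ V := (hηsub (mem_ball_self hη)).1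
    have hballV : ball x₀ rr ⊆ V := fun u hu => (hηsub (ball_subset_ball hrrη.le hu)).1
    have hc := hcov x₀ hx₀V rr hrr0 hballV
    have := hPbound rr hrr0 hrrδ (α * rr) (mul_nonneg hα0 hrr0.le) hc
    nlinarith
  -- THE KEY covering property
  have key : ∀ m' : ℝ, 0 < m' → m' < surJ Jf x₀ → ∃ r > (0:ℝ), ∀ x ∈ ball x₀ r,
      ∀ ρ > (0:ℝ), ball x ρ ⊆ ball x₀ r → ball (f x) (m' * ρ) ⊆ f '' ball x ρ := by
    intro m' hm'0 hm'lt
    have hSne : {c : ℝ | ∃ r > (0 : ℝ),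
        c = sInf (banachC '' convexHull ℝ (⋃ z ∈ ball x₀ r, Jf z))}.Nonempty :=
      ⟨_, 1, one_pos, rfl⟩
    obtain ⟨c, ⟨r, hr, rfl⟩, hm'c⟩ := real_exists_gt hSne hm'lt
    set mr := sInf (banachC '' convexHull ℝ (⋃ z ∈ ball x₀ r, Jf z)) with hmr
    set m'' := (m' + mr)/2 with hm''def
    have hm''1 : m' < m'' := by rw [hm''def]; linarith
    have hm''2 : m'' < mr := by rw [hm''def]; linarith
    have hm''0 : 0 < m'' := by linarith
    refine ⟨r, hr, ?_⟩
    intro x hx ρ hρ hsub y hy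
    rcases eq_or_ne y (f x) with rfl | hyne
    · exact ⟨x, mem_ball_self hρ, rfl⟩
    set F : X → ℝ := fun z => ‖f z - y‖ with hFdef
    have hFcont : Continuous F := (fcont.sub continuous_const).norm
    have hF0 : ∀ z, 0 ≤ F z := fun z => norm_nonneg _
    obtain ⟨z, hz1, hz2⟩ := ekeland_cont hFcont hF0 (x := x) hm''0
    have hFx : F x < m' * ρ := by
      have h := mem_ball.1 hy
      show ‖f x - y‖ < m' * ρ
      rw [← dist_eq_norm, dist_comm]
      exact h
    have hdzx : dist z x < ρ := by
      have h4 : m' * ρ < m'' * ρ := mul_lt_mul_of_pos_right hm''1 hρ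
      have h3 : m'' * dist z x < m'' * ρ := by linarith [hz1, hF0 z]
      exact lt_of_mul_lt_mul_left h3 hm''0.le
    rcases eq_or_ne (f z) y with hfz | hfz
    · exact ⟨z, mem_ball.2 hdzx, hfz⟩
    · exfalso
      have hzball : z ∈ ball x₀ r := hsub (mem_ball.2 hdzx)
      have hyfz : y ≠ f z := fun h => hfz h.symm
      obtain ⟨hclosedΔ, hconvΔ, hpj⟩ := hcr z (Set.mem_univ z) y hyfz
      have hnormΔ : ∀ w ∈ DeltaF f Jf y z, mr ≤ ‖w‖ := by
        rintro w ⟨y', hy', T, hT, rfl⟩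
        have hy'1 : ‖y'‖ = 1 :=
          norm_eq_one_of_clarkeSubdiff_norm (sub_ne_zero_of_ne hfz) hy'
        have hcoT : T ∈ closure (convexHull ℝ (⋃ z' ∈ ball x₀ r, Jf z')) := by
          apply closure_mono (convexHull_mono ?_) hT
          exact Set.subset_biUnion_of_mem hzball
        have hmono : ∀ S ∈ convexHull ℝ (⋃ z' ∈ ball x₀ r, Jf z'), mr ≤ banachC S := by
          intro S hS
          exact csInf_le ⟨0, by rintro a ⟨T', -, rfl⟩; exact banachC_nonneg T'⟩
            (Set.mem_image_of_mem _ hS)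
        have h2 : mr ≤ banachC T := le_banachC_of_closure hmono hcoT
        calc mr ≤ banachC T := h2
          _ ≤ ‖ContinuousLinearMap.comp y' T‖ := banachC_le_comp hy'1 T
      obtain ⟨v, hvlt⟩ := key_sep (DeltaF f Jf y z) hpj.1 hconvΔ hclosedΔ
        hm''0.le hm''2 hnormΔ
      have hdini : -(m'' * ‖v‖) ≤ diniPlus F z v := by
        apply neg_le_diniPlus hm''0.le
        intro t ht
        have h := hz2 (z + t • v)
        rw [dist_eq_norm, add_sub_cancel_left, norm_smul, Real.norm_eq_abs,
          abs_of_pos ht] at h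
        exact h
      have hsup : diniPlus F z v ≤
          sSup ((fun w : StrongDual ℝ X => w v) '' DeltaF f Jf y z) :=
        hpj.2 (ContinuousLinearMap.id ℝ ℝ) v
      linarith [hdini, hsup, hvlt]
  have hcbeq : covBound f x₀ = sSup covSet := rfl
  have hcov0 : 0 ≤ covBound f x₀ := by
    rw [hcbeq]
    exact le_csSup hcovBdd hzeromem
  constructor
  · show surJ Jf x₀ ≤ covBound f x₀
    by_contra hlt
    push_neg at hlt
    set m' := (covBound f x₀ + surJ Jf x₀)/2 with hm'
    have hm'0 : 0 < m' := by rw [hm']; linarith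
    have hm's : m' < surJ Jf x₀ := by rw [hm']; linarith
    obtain ⟨r, hr, hcov⟩ := key m' hm'0 hm's
    have hmem : m' ∈ covSet := ⟨hm'0.le, ball x₀ r, Metric.ball_mem_nhds x₀ hr, hcov⟩
    have h := le_csSup hcovBdd hmem
    rw [← hcbeq] at h
    rw [hm'] at h
    linarith
  · -- covBound ≤ ioffeSur
    have hioffeS_nonneg : ∀ rr : ℝ, 0 ≤ ioffeS f x₀ rr := by
      intro rr
      apply Real.sSup_nonneg
      rintro q ⟨hq, -⟩
      exact hq
    have hQne : ∀ ε : ℝ, 0 < ε →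
        {q : ℝ | ∃ rr : ℝ, 0 < rr ∧ rr < ε ∧ q = ioffeS f x₀ rr / rr}.Nonempty :=
      fun ε hε => ⟨ioffeS f x₀ (ε/2) / (ε/2), ε/2, by positivity, by linarith, rfl⟩
    have hQbddB : ∀ ε : ℝ, BddBelow
        {q : ℝ | ∃ rr : ℝ, 0 < rr ∧ rr < ε ∧ q = ioffeS f x₀ rr / rr} := by
      intro ε
      refine ⟨0, ?_⟩
      rintro q ⟨rr, hrr, -, rfl⟩
      exact div_nonneg (hioffeS_nonneg rr) hrr.le
    have hioffeS_le : ∀ rr : ℝ, 0 < rr → rr ≤ δL → ioffeS f x₀ rr ≤ (KL:ℝ) * rr := by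
      intro rr h1 h2
      apply Real.sSup_le
      · rintro ρ ⟨hρ0, hρsub⟩
        exact hPbound rr h1 h2 ρ hρ0 hρsub
      · exact mul_nonneg KL.coe_nonneg h1.le
    have hsurBdd : BddAbove {c : ℝ | ∃ ε > (0:ℝ),
        c = sInf {q : ℝ | ∃ r : ℝ, 0 < r ∧ r < ε ∧ q = ioffeS f x₀ r / r}} := by
      refine ⟨(KL:ℝ), ?_⟩
      rintro c ⟨ε, hε, rfl⟩
      set rr := min (ε/2) δL with hrr
      have hrr0 : 0 < rr := lt_min (by linarith) hδL
      have hrrε : rr < ε := lt_of_le_of_lt (min_le_left _ _) (by linarith)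
      have hrrδ : rr ≤ δL := min_le_right _ _
      have h1 : sInf {q : ℝ | ∃ r : ℝ, 0 < r ∧ r < ε ∧ q = ioffeS f x₀ r / r}
          ≤ ioffeS f x₀ rr / rr := csInf_le (hQbddB ε) ⟨rr, hrr0, hrrε, rfl⟩
      have h2 : ioffeS f x₀ rr / rr ≤ (KL:ℝ) := by
        rw [div_le_iff₀ hrr0]
        exact hioffeS_le rr hrr0 hrrδ
      linarith
    show covBound f x₀ ≤ ioffeSur f x₀
    rw [hcbeq]
    apply csSup_le ⟨0, hzeromem⟩
    rintro α ⟨hα0, V, hV, hcov⟩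
    obtain ⟨η, hη, hηV⟩ := Metric.mem_nhds_iff.1 hV
    set ε := min η δL with hε
    have hε0 : 0 < ε := lt_min hη hδL
    have hαinf : α ≤ sInf {q : ℝ | ∃ r : ℝ, 0 < r ∧ r < ε ∧ q = ioffeS f x₀ r / r} := by
      apply le_csInf (hQne ε hε0)
      rintro q ⟨rr, hrr0, hrrε, rfl⟩
      have hrrη : rr < η := lt_of_lt_of_le hrrε (min_le_left _ _)
      have hrrδ : rr ≤ δL := (lt_of_lt_of_le hrrε (min_le_right _ _)).le
      have hx₀V : x₀ ∈ V := hηV (mem_ball_self hη)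
      have hballV : ball x₀ rr ⊆ V := fun u hu => hηV (ball_subset_ball hrrη.le hu)
      have hmem : α * rr ∈ {ρ : ℝ | 0 ≤ ρ ∧ ball (f x₀) ρ ⊆ f '' ball x₀ rr} :=
        ⟨mul_nonneg hα0 hrr0.le, hcov x₀ hx₀V rr hrr0 hballV⟩
      have hPbdd : BddAbove {ρ : ℝ | 0 ≤ ρ ∧ ball (f x₀) ρ ⊆ f '' ball x₀ rr} := by
        refine ⟨(KL:ℝ) * rr, ?_⟩
        rintro ρ ⟨hρ0, hρsub⟩
        exact hPbound rr hrr0 hrrδ ρ hρ0 hρsub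
      have h3 : α * rr ≤ ioffeS f x₀ rr := le_csSup hPbdd hmem
      rw [le_div_iff₀ hrr0]
      exact h3
    exact hαinf.trans (le_csSup hsurBdd ⟨ε, hε0, rfl⟩)
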